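/- Fix an odd integer r ≥ 3 and let {S_n^{(r)}} be defined by S_n^{(r)} = S_{n−1}^{(r)} + S_{n−(r+1)/2}^{(r)} + S_{n−r}^{(r)} for n ≥ r, with S_0^{(r)} = ⋯ = S_{r−2}^{(r)} = 0 and S_{r−1}^{(r)} = 1. For every integer n ≥ (r+1)/2, the Toeplitz–Hessenberg determinant det(−1; S_{(r−1)/2}^{(r)}, S_{(r+1)/2}^{(r)}, …, S_{n+(r−3)/2}^{(r)}) equals Σ_{i=0}^{⌊(2n−r−1)/r⌋} C(2n−r−1−(r−1)i, i). -/

import Mathlib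

open Finset Matrix


/-- The determinant of the `n × n` Toeplitz–Hessenberg matrix whose `(i,j)` entry
(0-indexed) is `a (i - j + 1)` when `j ≤ i + 1` (so `a 0` lies on the superdiagonal
and `a k` on the `k`-th subdiagonal) and `0` otherwise. -/
def THdet (a : ℕ → ℤ) (n : ℕ) : ℤ :=
  (Matrix.of fun i j : Fin n => if (j : ℕ) ≤ (i : ℕ) + 1 then a ((i : ℕ) + 1 - (j : ℕ)) else 0).det

def Dseq (a : ℕ → ℤ) : ℕ → ℤ
  | 0 => 1
  | n + 1 => ∑ k ∈ (Finset.range (n+1)).attach, a (n + 1 - k.1) * Dseq a k.1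
decreasing_by exact Finset.mem_range.mp k.2

lemma Dseq_succ (a : ℕ → ℤ) (n : ℕ) :
    Dseq a (n+1) = ∑ k ∈ Finset.range (n+1), a (n + 1 - k) * Dseq a k := by
  rw [Dseq]
  exact Finset.sum_attach _ (fun k => a (n + 1 - k) * Dseq a k)

lemma THdet_eq (a : ℕ → ℤ) (ha : a 0 = -1) (n : ℕ) : THdet a n = Dseq a n := by
  cases n with
  | zero => simp [THdet, Dseq]
  | succ n =>
    set A : Matrix (Fin (n+1)) (Fin (n+1)) ℤ :=
      Matrix.of fun i j : Fin (n+1) =>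
        if (j : ℕ) ≤ (i : ℕ) + 1 then a ((i : ℕ) + 1 - (j : ℕ)) else 0 with hA
    have hAapp : ∀ i j : Fin (n+1),
        A i j = if (j : ℕ) ≤ (i : ℕ) + 1 then a ((i : ℕ) + 1 - (j : ℕ)) else 0 := fun i j => rfl
    set x : Fin (n+1) → ℤ := fun i => Dseq a i.1 with hxdef
    -- A *ᵥ x = single at last
    have hx : A *ᵥ x = Pi.single (Fin.last n) (Dseq a (n+1)) := by
      funext i
      have : (A *ᵥ x) i = ∑ j : Fin (n+1), A i j * x j := rfl
      rw [this]
      have hsum : ∑ j : Fin (n+1), A i j * x j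
          = ∑ j ∈ Finset.range (n+1),
              (if j ≤ (i : ℕ) + 1 then a ((i : ℕ) + 1 - j) else 0) * Dseq a j := by
        rw [Finset.sum_range fun j => (if j ≤ (i : ℕ) + 1 then a ((i : ℕ) + 1 - j) else 0) * Dseq a j]
        rfl
      rw [hsum]
      by_cases hi : (i : ℕ) = n
      · -- last row
        have h1 : ∀ j ∈ Finset.range (n+1), (if j ≤ (i:ℕ)+1 then a ((i:ℕ)+1-j) else 0) * Dseq a j
            = a (n+1-j) * Dseq a j := by
          intro j hj
          rw [Finset.mem_range] at hj
          rw [if_pos (by omega), hi]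
        rw [Finset.sum_congr rfl h1, ← Dseq_succ]
        have : i = Fin.last n := Fin.ext hi
        rw [this, Pi.single_eq_same]
      · -- i < n
        have hilt : (i : ℕ) < n := lt_of_le_of_ne (Nat.lt_succ_iff.mp i.isLt) hi
        have hsub : Finset.range ((i:ℕ)+2) ⊆ Finset.range (n+1) := by
          apply Finset.range_subset_range.mpr; omega
        rw [← Finset.sum_subset hsub ?van]
        case van =>
          intro j hj hj2
          rw [Finset.mem_range] at hj hj2
          rw [if_neg (by omega), zero_mul]
        have h2 : ∀ j ∈ Finset.range ((i:ℕ)+2),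
            (if j ≤ (i:ℕ)+1 then a ((i:ℕ)+1-j) else 0) * Dseq a j
            = a ((i:ℕ)+1-j) * Dseq a j := by
          intro j hj
          rw [Finset.mem_range] at hj
          rw [if_pos (by omega)]
        rw [Finset.sum_congr rfl h2, Finset.sum_range_succ, Nat.sub_self, ha,
          ← Dseq_succ, Pi.single_eq_of_ne (by exact fun h => hi (by rw [h]; rfl))]
        ring
    -- the auxiliary determinant
    have hdet1 : (A.updateCol 0 (Pi.single (Fin.last n) 1)).det = 1 := by
      set B := A.updateCol 0 (Pi.single (Fin.last n) (1:ℤ)) with hB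
      have hperm : (B.submatrix id (finRotate (n+1))).det
          = (Equiv.Perm.sign (finRotate (n+1)) : ℤ) * B.det := det_permute' _ _
      have htri : (B.submatrix id (finRotate (n+1))).det
          = ∏ i : Fin (n+1), (B.submatrix id (finRotate (n+1))) i i := by
        apply Matrix.det_of_lowerTriangular
        intro i j hij
        have hij' : (i:ℕ) < (j:ℕ) := hij
        simp only [Matrix.submatrix_apply, id_eq, finRotate_succ_apply]
        by_cases hjl : j = Fin.last n
        · rw [hjl]
          have : (Fin.last n) + 1 = 0 := by
            rw [← finRotate_succ_apply, finRotate_last]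
          rw [this, hB, Matrix.updateCol_apply, if_pos rfl,
            Pi.single_eq_of_ne (by intro h; rw [h] at hij'; simp at hij'; omega)]
        · have hjn : (j:ℕ) < n := by
            rcases Nat.lt_succ_iff_lt_or_eq.mp j.isLt with h | h
            · exact h
            · exact absurd (Fin.ext h) hjl
          have hval : ((j + 1 : Fin (n+1)) : ℕ) = (j:ℕ) + 1 := by
            rw [Fin.val_add_one_of_lt]
            exact Fin.lt_last_iff_ne_last.mpr hjl
          have hne : (j + 1 : Fin (n+1)) ≠ 0 := by
            intro h
            rw [Fin.ext_iff] at h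
            rw [hval] at h
            simp at h
          rw [hB, Matrix.updateCol_apply, if_neg hne, hAapp, if_neg (by omega)]
      have hdiag : ∏ i : Fin (n+1), (B.submatrix id (finRotate (n+1))) i i = (-1)^n := by
        rw [Fin.prod_univ_castSucc]
        have hlast : (B.submatrix id (finRotate (n+1))) (Fin.last n) (Fin.last n) = 1 := by
          simp only [Matrix.submatrix_apply, id_eq, finRotate_last]
          rw [hB, Matrix.updateCol_apply, if_pos rfl, Pi.single_eq_same]
        have hcast : ∀ i : Fin n,
            (B.submatrix id (finRotate (n+1))) i.castSucc i.castSucc = -1 := by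
          intro i
          simp only [Matrix.submatrix_apply, id_eq, finRotate_succ_apply]
          have hlt : (i.castSucc : Fin (n+1)) < Fin.last n := Fin.castSucc_lt_last i
          have hval : ((i.castSucc + 1 : Fin (n+1)) : ℕ) = (i:ℕ) + 1 := by
            rw [Fin.val_add_one_of_lt hlt]; rfl
          have hne : (i.castSucc + 1 : Fin (n+1)) ≠ 0 := by
            intro h; rw [Fin.ext_iff] at h; rw [hval] at h; simp at h
          rw [hB, Matrix.updateCol_apply, if_neg hne, hAapp, hval]
          rw [if_pos (by simp), ]
          have : (i.castSucc : ℕ) + 1 - ((i:ℕ)+1) = 0 := by simp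
          rw [this, ha]
        rw [hlast, Finset.prod_congr rfl (fun i _ => hcast i)]
        simp
      rw [htri, hdiag] at hperm
      rw [sign_finRotate, Nat.add_sub_cancel] at hperm
      have : ((((-1:ℤˣ)^n) : ℤˣ) : ℤ) = (-1:ℤ)^n := by push_cast; ring
      rw [this] at hperm
      have hne : ((-1:ℤ)^n) ≠ 0 := pow_ne_zero _ (by norm_num)
      have hperm := mul_left_cancel₀ hne (by linarith [hperm] : (-1:ℤ)^n * B.det = (-1)^n * 1)
      -- hperm : (-1)^n = (-1)^n * B.det
      nlinarith [hperm, sq_nonneg ((-1:ℤ)^n)]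
    -- Cramer
    have hcr : Matrix.cramer A (A *ᵥ x) = A.det • x := by
      rw [Matrix.cramer_eq_adjugate_mulVec, Matrix.mulVec_mulVec, Matrix.adjugate_mul,
        Matrix.smul_mulVec, Matrix.one_mulVec]
    rw [hx] at hcr
    have hsingle : Pi.single (Fin.last n) (Dseq a (n+1))
        = (Dseq a (n+1)) • (Pi.single (Fin.last n) (1:ℤ) : Fin (n+1) → ℤ) := by
      funext j
      by_cases h : j = Fin.last n
      · subst h; simp
      · simp [Pi.single_eq_of_ne h]
    rw [hsingle, _root_.map_smul] at hcr
    have := congrFun hcr 0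
    simp only [Pi.smul_apply, smul_eq_mul] at this
    rw [Matrix.cramer_apply, hdet1] at this
    have hx0 : x 0 = 1 := by
      show Dseq a ((0 : Fin (n+1)) : ℕ) = 1
      norm_num [Dseq]
    rw [hx0, mul_one, mul_one] at this
    exact this.symm


def Fb (r N : ℕ) : ℤ := ∑ i ∈ Finset.range (N / r + 1), ((N - (r - 1) * i).choose i : ℤ)

lemma Fb_small (r N : ℕ) (h : N < r) : Fb r N = 1 := by
  unfold Fb
  rw [Nat.div_eq_of_lt h]
  simp

lemma Fb_ext (r N b : ℕ) (hr : 1 ≤ r) (h : N / r ≤ b) :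
    ∑ i ∈ Finset.range (b + 1), ((N - (r - 1) * i).choose i : ℤ) = Fb r N := by
  unfold Fb
  refine (Finset.sum_subset (Finset.range_subset_range.mpr (show N / r + 1 ≤ b + 1 by omega)) ?_).symm
  intro i hi hni
  rw [Finset.mem_range] at hi hni
  have hgt : N / r < i := by omega
  have h1 : N < i * r := (Nat.div_lt_iff_lt_mul (by omega)).mp hgt
  have h2 : i * r = (r - 1) * i + i := by
    obtain ⟨r', rfl⟩ : ∃ r', r = r' + 1 := ⟨r - 1, by omega⟩
    simp only [Nat.add_sub_cancel]
    ring
  have hipos : 1 ≤ i := lt_of_le_of_lt (Nat.zero_le _) hgt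
  have h3 : N - (r - 1) * i < i := by omega
  rw [Nat.choose_eq_zero_of_lt h3]
  norm_num

lemma Fb_rec (r N : ℕ) (hr : 1 ≤ r) (h : r ≤ N) : Fb r N = Fb r (N - 1) + Fb r (N - r) := by
  have hq : N / r = (N - r) / r + 1 := Nat.div_eq_sub_div (by omega) h
  have key : ∀ i ∈ Finset.range (N / r),
      ((N - (r - 1) * (i + 1)).choose (i + 1) : ℤ)
        = ((N - 1 - (r - 1) * (i + 1)).choose (i + 1) : ℤ)
          + (((N - r) - (r - 1) * i).choose i : ℤ) := by
    intro i hi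
    rw [Finset.mem_range] at hi
    have hle : (i + 1) * r ≤ N :=
      (Nat.le_div_iff_mul_le (show 0 < r by omega)).mp hi
    have hmul : (i + 1) * r = (r - 1) * (i + 1) + (i + 1) := by
      obtain ⟨r', rfl⟩ : ∃ r', r = r' + 1 := ⟨r - 1, by omega⟩
      simp only [Nat.add_sub_cancel]
      ring
    have hmul2 : (r - 1) * (i + 1) = (r - 1) * i + (r - 1) := by ring
    have h1 : N - (r - 1) * (i + 1) = (N - 1 - (r - 1) * (i + 1)) + 1 := by omega
    have h2 : N - 1 - (r - 1) * (i + 1) = (N - r) - (r - 1) * i := by omega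
    rw [h1, Nat.choose_succ_succ']
    push_cast
    rw [h2]
    ring
  have e1 : Fb r N = 1 + ∑ i ∈ Finset.range (N / r),
      ((N - (r - 1) * (i + 1)).choose (i + 1) : ℤ) := by
    unfold Fb
    rw [Finset.sum_range_succ' (fun i => ((N - (r - 1) * i).choose i : ℤ)) (N / r)]
    norm_num [add_comm]
  have e3 : ∑ i ∈ Finset.range (N / r), ((N - 1 - (r - 1) * (i + 1)).choose (i + 1) : ℤ) + 1
      = Fb r (N - 1) := by
    have h1 : (1 : ℤ) = ((N - 1 - (r - 1) * 0).choose 0 : ℤ) := by simp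
    rw [h1, ← Finset.sum_range_succ' (fun i => ((N - 1 - (r - 1) * i).choose i : ℤ)) (N / r)]
    exact Fb_ext r (N - 1) (N / r) hr (le_trans (Nat.div_le_div_right (by omega)) le_rfl)
  have e4 : ∑ i ∈ Finset.range (N / r), (((N - r) - (r - 1) * i).choose i : ℤ) = Fb r (N - r) := by
    unfold Fb
    rw [← hq]
  rw [e1, Finset.sum_congr rfl key, Finset.sum_add_distrib, ← e3, ← e4]
  ring

theorem stmt_18 (r : ℕ) (hr : 3 ≤ r) (hodd : Odd r) (S : ℕ → ℤ)
    (hS0 : ∀ k, k < r - 1 → S k = 0) (hS1 : S (r - 1) = 1)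
    (hSrec : ∀ n, r ≤ n → S n = S (n - 1) + S (n - (r + 1) / 2) + S (n - r))
    (n : ℕ) (hn : (r + 1) / 2 ≤ n) :
    THdet (fun k => if k = 0 then -1 else S (k - 1 + (r - 1) / 2)) n =
      ∑ i ∈ Finset.range ((2 * n - r - 1) / r + 1),
        ((2 * n - r - 1 - (r - 1) * i).choose i : ℤ) := by
  obtain ⟨m, rfl⟩ : ∃ m, r = 2 * m + 1 := by
    obtain ⟨t, ht⟩ := hodd; exact ⟨t, by omega⟩
  have hm1 : 1 ≤ m := by omega
  have hfun : (fun k => if k = 0 then (-1 : ℤ) else S (k - 1 + (2 * m + 1 - 1) / 2))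
      = fun k => if k = 0 then -1 else S (k - 1 + m) := by
    funext k
    rw [show (2 * m + 1 - 1) / 2 = m by omega]
  rw [hfun]
  set a : ℕ → ℤ := fun k => if k = 0 then -1 else S (k - 1 + m) with hadef
  -- basic facts about S
  have hs0 : ∀ j, j < 2 * m → S j = 0 := fun j hj => hS0 j (by omega)
  have hs1 : S (2 * m) = 1 := by
    have h := hS1
    rw [show 2 * m + 1 - 1 = 2 * m by omega] at h
    exact h
  have hrec : ∀ j, 2 * m + 1 ≤ j → S j = S (j - 1) + S (j - (m + 1)) + S (j - (2 * m + 1)) := by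
    intro j hj
    have h := hSrec j hj
    rw [show (2 * m + 1 + 1) / 2 = m + 1 by omega] at h
    exact h
  have hSone : ∀ t, t ≤ m → S (2 * m + t) = 1 := by
    intro t
    induction t with
    | zero => intro _; exact hs1
    | succ t ih =>
      intro ht
      show S (2 * m + t + 1) = 1
      have h1 := hrec (2 * m + t + 1) (by omega)
      rw [show 2 * m + t + 1 - 1 = 2 * m + t by omega,
        show 2 * m + t + 1 - (m + 1) = m + t by omega,
        show 2 * m + t + 1 - (2 * m + 1) = t by omega] at h1
      rw [h1, ih (by omega), hs0 (m + t) (by omega), hs0 t (by omega)]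
      ring
  -- basic facts about a
  have ha0 : a 0 = -1 := rfl
  have haS : ∀ k, 1 ≤ k → a k = S (k - 1 + m) := by
    intro k hk
    rw [hadef]
    simp only []
    rw [if_neg (by omega)]
  have haz : ∀ k, 1 ≤ k → k ≤ m → a k = 0 := by
    intro k h1 h2
    rw [haS k h1]
    exact hs0 _ (by omega)
  have hao : ∀ k, m + 1 ≤ k → k ≤ 2 * m + 1 → a k = 1 := by
    intro k h1 h2
    rw [haS k (by omega), show k - 1 + m = 2 * m + (k - 1 - m) by omega]
    exact hSone (k - 1 - m) (by omega)
  have harec : ∀ k, m + 2 ≤ k →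
      a k = a (k - 1) + a (k - m - 1) + (if 2 * m + 2 ≤ k then a (k - 2 * m - 1) else 0) := by
    intro k hk
    rw [haS k (by omega), haS (k - 1) (by omega), haS (k - m - 1) (by omega)]
    have h1 := hrec (k - 1 + m) (by omega)
    rw [show k - 1 + m - 1 = k - 1 - 1 + m by omega,
      show k - 1 + m - (m + 1) = k - 2 by omega,
      show k - 1 + m - (2 * m + 1) = k - m - 2 by omega] at h1
    rw [show k - m - 1 - 1 + m = k - 2 by omega]
    split_ifs with h2
    · rw [haS (k - 2 * m - 1) (by omega), show k - 2 * m - 1 - 1 + m = k - m - 2 by omega]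
      exact h1
    · rw [h1, hs0 (k - m - 2) (by omega), add_zero]
  -- recurrence form for Dseq
  have hD' : ∀ p, 1 ≤ p → Dseq a p = ∑ j ∈ Finset.range p, a (p - j) * Dseq a j := by
    intro p hp
    obtain ⟨q, rfl⟩ : ∃ q, p = q + 1 := ⟨p - 1, by omega⟩
    exact Dseq_succ a q
  -- small values
  have hDsmall : ∀ j, j ≤ 2 * m + 1 → Dseq a j = if j = 0 then 1 else if j ≤ m then 0 else 1 := by
    intro j
    induction j using Nat.strong_induction_on with
    | _ j ih =>
      intro hj
      match j, hj with
      | 0, _ => simp [Dseq]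
      | (j+1), hj =>
        rw [Dseq_succ]
        by_cases hjm : j + 1 ≤ m
        · rw [if_neg (by omega), if_pos hjm]
          apply Finset.sum_eq_zero
          intro k hk
          rw [Finset.mem_range] at hk
          rcases Nat.eq_zero_or_pos k with hk0 | hk0
          · subst hk0
            rw [show j + 1 - 0 = j + 1 by omega, haz (j + 1) (by omega) (by omega), zero_mul]
          · rw [ih k (by omega) (by omega), if_neg (by omega), if_pos (by omega), mul_zero]
        · rw [if_neg (by omega), if_neg hjm]
          rw [Finset.sum_eq_single_of_mem 0 (Finset.mem_range.mpr (by omega))]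
          · rw [ih 0 (by omega) (by omega), if_pos rfl, Nat.sub_zero,
              hao (j + 1) (by omega) (by omega), one_mul]
          · intro k hk hk0
            rw [Finset.mem_range] at hk
            by_cases hkm : k ≤ m
            · rw [ih k (by omega) (by omega), if_neg hk0, if_pos hkm, mul_zero]
            · rw [haz (j + 1 - k) (by omega) (by omega), zero_mul]
  -- the short recurrence
  have hDbig : ∀ p, 2 * m + 1 ≤ p →
      Dseq a (p + 1) = Dseq a p + 2 * Dseq a (p - m) + Dseq a (p - 2 * m) := by
    intro p hp
    rw [Dseq_succ]
    have hsplit : ∑ k ∈ Finset.range (p + 1), a (p + 1 - k) * Dseq a k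
        = ∑ k ∈ Finset.range (p - m), a (p + 1 - k) * Dseq a k
          + ∑ k ∈ Finset.Ico (p - m) (p + 1), a (p + 1 - k) * Dseq a k := by
      rw [Finset.range_eq_Ico, Finset.range_eq_Ico]
      exact (Finset.sum_Ico_consecutive (fun k => a (p + 1 - k) * Dseq a k) (m := 0) (n := p - m) (k := p + 1) (by omega) (by omega)).symm
    have h2 : ∑ k ∈ Finset.Ico (p - m) (p + 1), a (p + 1 - k) * Dseq a k = Dseq a (p - m) := by
      rw [Finset.sum_eq_single_of_mem (p - m) (Finset.mem_Ico.mpr ⟨le_rfl, by omega⟩)]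
      · rw [show p + 1 - (p - m) = m + 1 by omega, hao (m + 1) le_rfl (by omega), one_mul]
      · intro k hk hkne
        rw [Finset.mem_Ico] at hk
        rw [haz (p + 1 - k) (by omega) (by omega), zero_mul]
    have h3 : ∀ k ∈ Finset.range (p - m), a (p + 1 - k) * Dseq a k
        = a (p - k) * Dseq a k + a (p - m - k) * Dseq a k
          + (if k < p - 2 * m then a (p - 2 * m - k) * Dseq a k else 0) := by
      intro k hk
      rw [Finset.mem_range] at hk
      rw [harec (p + 1 - k) (by omega)]
      rw [show p + 1 - k - 1 = p - k by omega, show p + 1 - k - m - 1 = p - m - k by omega,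
        show p + 1 - k - 2 * m - 1 = p - 2 * m - k by omega]
      by_cases hc : k < p - 2 * m
      · rw [if_pos hc, if_pos (show 2 * m + 2 ≤ p + 1 - k by omega)]
        ring
      · rw [if_neg hc, if_neg (show ¬ (2 * m + 2 ≤ p + 1 - k) by omega)]
        ring
    have S1 : ∑ k ∈ Finset.range (p - m), a (p - k) * Dseq a k = Dseq a p := by
      rw [hD' p (by omega)]
      apply Finset.sum_subset (Finset.range_subset_range.mpr (by omega))
      intro k hk hnk
      rw [Finset.mem_range] at hk hnk
      rw [haz (p - k) (by omega) (by omega), zero_mul]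
    have S2 : ∑ k ∈ Finset.range (p - m), a (p - m - k) * Dseq a k = Dseq a (p - m) :=
      (hD' (p - m) (by omega)).symm
    have S3 : ∑ k ∈ Finset.range (p - m),
        (if k < p - 2 * m then a (p - 2 * m - k) * Dseq a k else 0) = Dseq a (p - 2 * m) := by
      rw [hD' (p - 2 * m) (by omega)]
      have e : ∑ k ∈ Finset.range (p - 2 * m), a (p - 2 * m - k) * Dseq a k
          = ∑ k ∈ Finset.range (p - 2 * m),
              (if k < p - 2 * m then a (p - 2 * m - k) * Dseq a k else 0) :=
        Finset.sum_congr rfl (fun k hk => by rw [if_pos (Finset.mem_range.mp hk)])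
      rw [e]
      refine (Finset.sum_subset (Finset.range_subset_range.mpr (by omega)) ?_).symm
      intro k hk hnk
      rw [Finset.mem_range] at hk hnk
      rw [if_neg (by omega)]
    rw [hsplit, Finset.sum_congr rfl h3, Finset.sum_add_distrib, Finset.sum_add_distrib,
      S1, S2, S3, h2]
    ring
  -- main claim
  have main : ∀ q, m + 1 ≤ q → Dseq a q = Fb (2 * m + 1) (2 * q - (2 * m + 1) - 1) := by
    intro q
    induction q using Nat.strong_induction_on with
    | _ q ih =>
      intro hq
      by_cases hsm : q ≤ 2 * m + 1
      · rw [hDsmall q hsm, if_neg (by omega), if_neg (by omega), Fb_small _ _ (by omega)]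
      · obtain ⟨p, rfl⟩ : ∃ p, q = p + 1 := ⟨q - 1, by omega⟩
        rw [hDbig p (by omega), ih p (by omega) (by omega), ih (p - m) (by omega) (by omega)]
        have hA : 2 * (p + 1) - (2 * m + 1) - 1 = 2 * p - 2 * m := by omega
        have hB : 2 * p - (2 * m + 1) - 1 = 2 * p - 2 * m - 2 := by omega
        have hC : 2 * (p - m) - (2 * m + 1) - 1 = 2 * p - 4 * m - 2 := by omega
        rw [hA, hB, hC]
        have r1 := Fb_rec (2 * m + 1) (2 * p - 2 * m) (by omega) (by omega)
        rw [show 2 * p - 2 * m - (2 * m + 1) = 2 * p - 4 * m - 1 by omega] at r1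
        have r2 := Fb_rec (2 * m + 1) (2 * p - 2 * m - 1) (by omega) (by omega)
        rw [show 2 * p - 2 * m - 1 - 1 = 2 * p - 2 * m - 2 by omega,
          show 2 * p - 2 * m - 1 - (2 * m + 1) = 2 * p - 4 * m - 2 by omega] at r2
        by_cases hbig : 3 * m + 1 ≤ p
        · have hD3 := ih (p - 2 * m) (by omega) (by omega)
          rw [show 2 * (p - 2 * m) - (2 * m + 1) - 1 = 2 * p - 6 * m - 2 by omega] at hD3
          have r3 := Fb_rec (2 * m + 1) (2 * p - 4 * m - 1) (by omega) (by omega)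
          rw [show 2 * p - 4 * m - 1 - 1 = 2 * p - 4 * m - 2 by omega,
            show 2 * p - 4 * m - 1 - (2 * m + 1) = 2 * p - 6 * m - 2 by omega] at r3
          rw [hD3, r1, r2, r3]
          ring
        · have hD3 : Dseq a (p - 2 * m) = 0 := by
            rw [hDsmall (p - 2 * m) (by omega), if_neg (by omega), if_pos (by omega)]
          have r3 : Fb (2 * m + 1) (2 * p - 4 * m - 1) = 1 := Fb_small _ _ (by omega)
          have r4 : Fb (2 * m + 1) (2 * p - 4 * m - 2) = 1 := Fb_small _ _ (by omega)
          rw [hD3, r1, r2, r3, r4]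
          ring
  rw [THdet_eq a ha0 n, main n (by omega)]
  rfl
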